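/- Let M and N be n-parameter rectangle persistence modules with rectangles ∏_{i=1}^n (a_i,b_i) and ∏_{i=1}^n (c_i,d_i). Then d_I(M,N) = min{ max{ min_{1≤i≤n} (b_i−a_i)/2 , min_{1≤i≤n} (d_i−c_i)/2 } , max{ ‖c−a‖_∞ , ‖d−b‖_∞ } }. -/

import Mathlib

open Classical

noncomputable section

/-- A point of the parameter space `ℝⁿ`. -/
abbrev Pt (n : ℕ) := Fin n → ℝ

/-- Shift of a point by the diagonal vector `(ε, …, ε)`. -/
def shiftPt {n : ℕ} (u : Pt n) (ε : ℝ) : Pt n := fun i => u i + ε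

lemma shiftPt_mono {n : ℕ} {u v : Pt n} (ε : ℝ) (h : u ≤ v) :
    shiftPt u ε ≤ shiftPt v ε := fun i => add_le_add (h i) (le_refl ε)

lemma le_shiftPt {n : ℕ} (u : Pt n) {ε : ℝ} (hε : 0 ≤ ε) : u ≤ shiftPt u ε :=
  fun i => le_add_of_nonneg_right hε

/-- An `n`-parameter persistence module over the field `k`. -/
structure PersMod (k : Type) [Field k] (n : ℕ) where
  obj : Pt n → Type
  [acg : ∀ u, AddCommGroup (obj u)]
  [mod : ∀ u, Module k (obj u)]
  map : ∀ {u v : Pt n}, u ≤ v → (obj u →ₗ[k] obj v)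
  map_id : ∀ u : Pt n, map (le_refl u) = LinearMap.id
  map_comp : ∀ {u v w : Pt n} (h1 : u ≤ v) (h2 : v ≤ w),
    (map h2).comp (map h1) = map (h1.trans h2)

attribute [instance] PersMod.acg PersMod.mod

variable {k : Type} [Field k] {n : ℕ}

/-- A morphism of persistence modules. -/
structure PersHom (M N : PersMod k n) where
  app : ∀ u, M.obj u →ₗ[k] N.obj u
  natural : ∀ {u v : Pt n} (h : u ≤ v),
    (app v).comp (M.map h) = (N.map h).comp (app u)

/-- A morphism is trivial when every component is the zero map. -/
def PersHom.Trivial {M N : PersMod k n} (f : PersHom M N) : Prop := ∀ u, f.app u = 0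

/-- The `ε`-shift of a persistence module. -/
def PersMod.shift (M : PersMod k n) (ε : ℝ) : PersMod k n where
  obj u := M.obj (shiftPt u ε)
  map h := M.map (shiftPt_mono ε h)
  map_id u := M.map_id _
  map_comp h1 h2 := M.map_comp _ _

/-- `(f, g)` is an `ε`-interleaving pair between `M` and `N`. -/
def IsInterleavingPair (M N : PersMod k n) (ε : ℝ) (hε : 0 ≤ ε)
    (f : PersHom M (N.shift ε)) (g : PersHom N (M.shift ε)) : Prop :=
  (∀ u : Pt n, (g.app (shiftPt u ε)).comp (f.app u) =
      M.map ((le_shiftPt u hε).trans (le_shiftPt _ hε))) ∧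
  (∀ u : Pt n, (f.app (shiftPt u ε)).comp (g.app u) =
      N.map ((le_shiftPt u hε).trans (le_shiftPt _ hε)))

/-- `M` and `N` are `ε`-interleaved. -/
def Interleaved (M N : PersMod k n) (ε : ℝ) : Prop :=
  ∃ (hε : 0 ≤ ε) (f : PersHom M (N.shift ε)) (g : PersHom N (M.shift ε)),
    IsInterleavingPair M N ε hε f g

/-- The interleaving distance, with value in the extended reals. -/
def interleavingDist (M N : PersMod k n) : EReal :=
  sInf {x : EReal | ∃ ε : ℝ, Interleaved M N ε ∧ x = (ε : EReal)}

/-- `M` is `ε`-trivial : all transition maps `M_u → M_{u+(ε,…,ε)}` vanish. -/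
def EpsTrivial (M : PersMod k n) (ε : ℝ) : Prop :=
  ∀ (u : Pt n) (h : u ≤ shiftPt u ε), M.map h = 0

/-- The zero persistence module. -/
def ZeroMod (k : Type) [Field k] (n : ℕ) : PersMod k n where
  obj _ := PUnit
  map _ := 0
  map_id _ := by apply LinearMap.ext; intro x; exact Subsingleton.elim _ _
  map_comp _ _ := by apply LinearMap.ext; intro x; exact Subsingleton.elim _ _

/-- The space at `u` of the interval module on `I` : all of `k` if `u ∈ I`, `0` otherwise. -/
def segSpace (k : Type) [Field k] {n : ℕ} (I : Set (Pt n)) (u : Pt n) : Submodule k k where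
  carrier := {x | u ∉ I → x = 0}
  add_mem' := by intro x y hx hy h; simp only [Set.mem_setOf_eq] at *; rw [hx h, hy h, add_zero]
  zero_mem' := fun _ => rfl
  smul_mem' := by intro c x hx h; simp only [Set.mem_setOf_eq] at *; rw [hx h, smul_zero]

/-- The interval persistence module on an order-convex set `I` : `k` on `I` with identity
internal transition maps, `0` elsewhere. -/
def IntervalMod (k : Type) [Field k] {n : ℕ} (I : Set (Pt n)) (hI : I.OrdConnected) :
    PersMod k n where
  obj u := segSpace k I u
  map {u v} h :=
    { toFun := fun x => ⟨if v ∈ I then (x : k) else 0, by intro hv; simp [hv]⟩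
      map_add' := by intro x y; apply Subtype.ext; by_cases hv : v ∈ I <;> simp [hv]
      map_smul' := by intro c x; apply Subtype.ext; by_cases hv : v ∈ I <;> simp [hv] }
  map_id u := by
    apply LinearMap.ext; intro x
    apply Subtype.ext
    by_cases hu : u ∈ I
    · simp [hu]
    · simp [hu, x.2 hu]
  map_comp {u v w} h1 h2 := by
    apply LinearMap.ext; intro x
    apply Subtype.ext
    by_cases hw : w ∈ I
    · by_cases hv : v ∈ I
      · simp [hw, hv]
      · by_cases hu : u ∈ I
        · exact absurd (hI.out hu hw ⟨h1, h2⟩) hv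
        · simp [hw, hv, x.2 hu]
    · simp [hw]

/-- The open box `∏ᵢ (aᵢ, bᵢ)` with extended-real endpoints. -/
def box {n : ℕ} (a b : Fin n → EReal) : Set (Pt n) :=
  {u | ∀ i, a i < (u i : EReal) ∧ (u i : EReal) < b i}

lemma box_ordConnected {n : ℕ} (a b : Fin n → EReal) : (box a b).OrdConnected := by
  constructor
  intro u hu w hw v hv i
  exact ⟨lt_of_lt_of_le (hu i).1 (by exact_mod_cast hv.1 i),
    lt_of_le_of_lt (by exact_mod_cast hv.2 i) (hw i).2⟩

/-- The rectangle persistence module with underlying open rectangle `∏ᵢ (aᵢ, bᵢ)`. -/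
def RectMod (k : Type) [Field k] {n : ℕ} (a b : Fin n → EReal) : PersMod k n :=
  IntervalMod k (box a b) (box_ordConnected a b)

/-- Subtraction of extended reals with the conventions `(±∞) − (±∞) = 0`. -/
def esub (x y : EReal) : EReal :=
  if (x = ⊤ ∧ y = ⊤) ∨ (x = ⊥ ∧ y = ⊥) then 0 else x - y

/-- Absolute value on the extended reals (`|±∞| = +∞`). -/
def eabs (x : EReal) : EReal := max x (-x)

/-- The `ℓ^∞`-distance `‖x − y‖_∞` on extended `ℝⁿ`. -/
def supDist {n : ℕ} (x y : Fin n → EReal) : EReal := ⨆ i, eabs (esub (x i) (y i))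

/-- The closed formula for the interleaving distance between the rectangle modules with
rectangles `∏ (aᵢ, bᵢ)` and `∏ (cᵢ, dᵢ)`. -/
def dIFormula {n : ℕ} (a b c d : Fin n → EReal) : EReal :=
  min (max (⨅ i, esub (b i) (a i) / 2) (⨅ i, esub (d i) (c i) / 2))
      (max (supDist c a) (supDist d b))

/-- `M` and `N` are isomorphic persistence modules. -/
def PersIso (M N : PersMod k n) : Prop :=
  ∃ f : PersHom M N, ∀ u, Function.Bijective (f.app u)

/-- `M` is a non-zero persistence module. -/
def PersMod.Nonzero (M : PersMod k n) : Prop := ∃ (u : Pt n) (x : M.obj u), x ≠ 0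

/-- Direct sum of two persistence modules. -/
def dirSum (M N : PersMod k n) : PersMod k n where
  obj u := M.obj u × N.obj u
  map h := (M.map h).prodMap (N.map h)
  map_id u := by
    apply LinearMap.ext; intro x
    show ((M.map (le_refl u)) x.1, (N.map (le_refl u)) x.2) = x
    rw [M.map_id, N.map_id]; rfl
  map_comp h1 h2 := by
    apply LinearMap.ext; intro x
    show ((M.map _) ((M.map _) x.1), (N.map _) ((N.map _) x.2))
      = ((M.map _) x.1, (N.map _) x.2)
    have hM : (M.map h2) ((M.map h1) x.1) = (M.map (h1.trans h2)) x.1 := by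
      rw [← M.map_comp h1 h2]; rfl
    have hN : (N.map h2) ((N.map h1) x.2) = (N.map (h1.trans h2)) x.2 := by
      rw [← N.map_comp h1 h2]; rfl
    rw [hM, hN]

/-- Zigzag-connectedness of a subset of `ℝⁿ`. -/
def ZigzagConnected {n : ℕ} (I : Set (Pt n)) : Prop :=
  ∀ u ∈ I, ∀ v ∈ I,
    Relation.ReflTransGen (fun x y => x ∈ I ∧ y ∈ I ∧ (x ≤ y ∨ y ≤ x)) u v

/-- `I` is an interval in `ℝⁿ`: nonempty, order-convex and zigzag-connected. -/
def IsInterval {n : ℕ} (I : Set (Pt n)) : Prop :=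
  I.Nonempty ∧ I.OrdConnected ∧ ZigzagConnected I

/-- A partial multibijection `Fin m ⇸ Fin k'`, encoded by an `Option`-valued map that is
injective on matched indices. -/
def PartialInj {m k' : ℕ} (σ : Fin m → Option (Fin k')) : Prop :=
  ∀ i j l, σ i = some l → σ j = some l → i = j

/-- `σ` is an `ε`-matching between the barcodes `A` and `B` (families of intervals). -/
def IsEpsMatching (k : Type) [Field k] {n m k' : ℕ}
    (A : Fin m → Set (Pt n)) (hA : ∀ i, (A i).OrdConnected)
    (B : Fin k' → Set (Pt n)) (hB : ∀ j, (B j).OrdConnected)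
    (σ : Fin m → Option (Fin k')) (ε : ℝ) : Prop :=
  PartialInj σ ∧
  (∀ i, σ i = none → EpsTrivial (IntervalMod k (A i) (hA i)) (2 * ε)) ∧
  (∀ j, (∀ i, σ i ≠ some j) → EpsTrivial (IntervalMod k (B j) (hB j)) (2 * ε)) ∧
  (∀ i j, σ i = some j →
    Interleaved (IntervalMod k (A i) (hA i)) (IntervalMod k (B j) (hB j)) ε)

/-- The bottleneck distance between the interval decomposable modules with barcodes
`A` and `B`. -/
def bottleneckDist (k : Type) [Field k] {n m k' : ℕ}
    (A : Fin m → Set (Pt n)) (hA : ∀ i, (A i).OrdConnected)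
    (B : Fin k' → Set (Pt n)) (hB : ∀ j, (B j).OrdConnected) : EReal :=
  sInf {x : EReal | ∃ (ε : ℝ) (σ : Fin m → Option (Fin k')),
    0 ≤ ε ∧ IsEpsMatching k A hA B hB σ ε ∧ x = (ε : EReal)}

/-! ### Auxiliary lemmas for the main theorem -/

section Aux

/-! #### Extended-real arithmetic helpers -/

lemma ereal_add_le_cancel {x y : EReal} {r : ℝ} (h : x + (r : EReal) ≤ y + (r : EReal)) :
    x ≤ y :=
  (EReal.addLECancellable_coe r) (by rwa [add_comm (r : EReal) x, add_comm (r : EReal) y])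

lemma ereal_add_lt_cancel {x y : EReal} {r : ℝ} (h : x + (r : EReal) < y + (r : EReal)) :
    x < y := by
  by_contra hc
  exact absurd (add_le_add (not_lt.1 hc) (le_refl (r : EReal))) h.not_ge

lemma ereal_lt_sub_of_add_lt {x : EReal} {s r : ℝ} (h : x + (r : EReal) < (s : EReal)) :
    x < ((s - r : ℝ) : EReal) := by
  rw [EReal.coe_sub]
  exact (EReal.lt_sub_iff_add_lt (Or.inl (EReal.coe_ne_bot r))
    (Or.inl (EReal.coe_ne_top r))).2 h

lemma le_add_of_esub_le {x y : EReal} {r : ℝ} (h : esub x y ≤ (r : EReal)) :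
    x ≤ y + (r : EReal) := by
  unfold esub at h
  split_ifs at h with hs
  · rcases hs with ⟨hx, hy⟩ | ⟨hx, hy⟩
    · subst hx; subst hy; rw [EReal.top_add_coe]
    · subst hx; exact bot_le
  · have := (EReal.sub_le_iff_le_add (Or.inr (EReal.coe_ne_top r))
      (Or.inr (EReal.coe_ne_bot r))).1 h
    rwa [add_comm] at this

lemma esub_le_of_le_add {x y : EReal} {r : ℝ} (hr : 0 ≤ r) (h : x ≤ y + (r : EReal)) :
    esub x y ≤ (r : EReal) := by
  unfold esub
  split_ifs with hs
  · exact_mod_cast hr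
  · exact EReal.sub_le_of_le_add' h

lemma add_lt_of_coe_lt_esub {x y : EReal} {r : ℝ} (hr : 0 ≤ r)
    (h : (r : EReal) < esub x y) : y + (r : EReal) < x := by
  unfold esub at h
  split_ifs at h with hs
  · exact absurd h (by exact_mod_cast not_lt.2 hr)
  · have := (EReal.lt_sub_iff_add_lt (Or.inr (EReal.coe_ne_top r))
      (Or.inr (EReal.coe_ne_bot r))).1 h
    rwa [add_comm] at this

lemma esub_symm (x y : EReal) : esub y x = - esub x y := by
  unfold esub
  by_cases h : (x = ⊤ ∧ y = ⊤) ∨ (x = ⊥ ∧ y = ⊥)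
  · have h' : (y = ⊤ ∧ x = ⊤) ∨ (y = ⊥ ∧ x = ⊥) := by tauto
    rw [if_pos h', if_pos h, neg_zero]
  · have h' : ¬((y = ⊤ ∧ x = ⊤) ∨ (y = ⊥ ∧ x = ⊥)) := by tauto
    rw [if_neg h', if_neg h, EReal.neg_sub (by tauto) (by tauto), add_comm,
      ← sub_eq_add_neg]

lemma eabs_nonneg (x : EReal) : 0 ≤ eabs x := by
  rcases le_total 0 x with h | h
  · exact h.trans (le_max_left _ _)
  · have : (0 : EReal) ≤ -x := by
      have := EReal.le_neg_of_le_neg (a := x) (b := 0) (by simpa using h)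
      simpa using this
    exact this.trans (le_max_right _ _)

lemma eabs_esub_le_iff {x y : EReal} {r : ℝ} (hr : 0 ≤ r) :
    eabs (esub x y) ≤ (r : EReal) ↔ x ≤ y + (r : EReal) ∧ y ≤ x + (r : EReal) := by
  unfold eabs
  rw [max_le_iff]
  constructor
  · rintro ⟨h1, h2⟩
    rw [← esub_symm] at h2
    exact ⟨le_add_of_esub_le h1, le_add_of_esub_le h2⟩
  · rintro ⟨h1, h2⟩
    refine ⟨esub_le_of_le_add hr h1, ?_⟩
    rw [← esub_symm]
    exact esub_le_of_le_add hr h2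

lemma ereal_two_eq : ((2 : ℝ) : EReal) = (2 : EReal) := by norm_cast

lemma div2_le_iff {x : EReal} {t : ℝ} : x / 2 ≤ (t : EReal) ↔ x ≤ ((2 * t : ℝ) : EReal) := by
  rw [EReal.div_le_iff_le_mul (by norm_num) (ereal_two_eq ▸ EReal.coe_ne_top 2)]
  rw [EReal.coe_mul, ereal_two_eq]

lemma coe_lt_div2_iff {x : EReal} {t : ℝ} :
    (t : EReal) < x / 2 ↔ ((2 * t : ℝ) : EReal) < x :=
  lt_iff_lt_of_le_iff_le div2_le_iff

lemma esub_nonneg_of_lt {x y : EReal} (hy : y ≠ ⊤) (hx : x ≠ ⊥) (h : y < x) :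
    0 ≤ esub x y := by
  unfold esub
  split_ifs with hs
  · exact le_refl 0
  · exact (EReal.le_sub_iff_add_le (Or.inr hx) (Or.inl hy)).2 (by simpa using h.le)

/-! #### Basic facts about interval modules -/

variable {k : Type} [Field k] {n : ℕ}

lemma segSpace_eq_zero {I : Set (Pt n)} {u : Pt n} (hu : u ∉ I) (x : segSpace k I u) :
    x = 0 := Subtype.ext (x.2 hu)

/-- The canonical element `1` of the stalk at a point of the box. -/
def oneElt {I : Set (Pt n)} {u : Pt n} (hu : u ∈ I) : segSpace k I u :=
  ⟨(1 : k), fun h => absurd hu h⟩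

lemma intervalMap_ne_zero {I : Set (Pt n)} {hI : I.OrdConnected} {u v : Pt n} (h : u ≤ v)
    (hu : u ∈ I) (hv : v ∈ I) :
    ((IntervalMod k I hI).map h) (oneElt (k := k) hu) ≠ 0 := by
  intro hcontra
  have hval := congrArg (fun z : segSpace k I v => (z : k)) hcontra
  have : (if v ∈ I then (1 : k) else 0) = 0 := hval
  rw [if_pos hv] at this
  exact one_ne_zero this

lemma intervalMap_inj {I : Set (Pt n)} {hI : I.OrdConnected} {u v : Pt n} (h : u ≤ v)
    (hv : v ∈ I) (x : segSpace k I u) (hx : x ≠ 0) :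
    ((IntervalMod k I hI).map h) x ≠ 0 := by
  intro hz
  have hval := congrArg (fun z : segSpace k I v => (z : k)) hz
  have hval' : (if v ∈ I then (x : k) else 0) = 0 := hval
  rw [if_pos hv] at hval'
  exact hx (Subtype.ext hval')

/-! #### Membership in shifted boxes -/

lemma shift_coe (u : Pt n) (ε : ℝ) (i : Fin n) :
    ((shiftPt u ε i : ℝ) : EReal) = ((u i : ℝ) : EReal) + (ε : EReal) := by
  rw [shiftPt, ← EReal.coe_add]

lemma mem_box_iff {a b : Fin n → EReal} {u : Pt n} :
    u ∈ box a b ↔ ∀ i, a i < ((u i : ℝ) : EReal) ∧ ((u i : ℝ) : EReal) < b i := Iff.rfl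

/-! #### Geometry of interleaving shifts -/

section Geometry

variable {a b c d : Fin n → EReal} {ε : ℝ}

lemma geom1 (h1 : ∀ i, c i ≤ a i + (ε : EReal)) {u v : Pt n} (huv : u ≤ v)
    (hu : u ∈ box a b) (hv : shiftPt v ε ∈ box c d) : shiftPt u ε ∈ box c d := by
  intro i
  constructor
  · calc c i ≤ a i + (ε : EReal) := h1 i
      _ < ((u i : ℝ) : EReal) + (ε : EReal) :=
        EReal.add_lt_add_right_coe (hu i).1 ε
      _ = ((shiftPt u ε i : ℝ) : EReal) := (shift_coe u ε i).symm
  · have hmono : ((shiftPt u ε i : ℝ) : EReal) ≤ ((shiftPt v ε i : ℝ) : EReal) :=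
      EReal.coe_le_coe_iff.2 (add_le_add (huv i) (le_refl ε))
    exact lt_of_le_of_lt hmono (hv i).2

lemma geom2 (h2 : ∀ i, d i ≤ b i + (ε : EReal)) {u v : Pt n} (huv : u ≤ v)
    (hu : u ∈ box a b) (hv : shiftPt v ε ∈ box c d) : v ∈ box a b := by
  intro i
  constructor
  · exact lt_of_lt_of_le (hu i).1 (by exact_mod_cast huv i)
  · have h := (hv i).2.trans_le (h2 i)
    rw [shift_coe] at h
    exact ereal_add_lt_cancel h

lemma geom3 (h1 : ∀ i, c i ≤ a i + (ε : EReal)) (h4 : ∀ i, b i ≤ d i + (ε : EReal))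
    {u : Pt n} (hu : u ∈ box a b) (hu2 : shiftPt (shiftPt u ε) ε ∈ box a b) :
    shiftPt u ε ∈ box c d := by
  intro i
  constructor
  · calc c i ≤ a i + (ε : EReal) := h1 i
      _ < ((u i : ℝ) : EReal) + (ε : EReal) :=
        EReal.add_lt_add_right_coe (hu i).1 ε
      _ = ((shiftPt u ε i : ℝ) : EReal) := (shift_coe u ε i).symm
  · have h := (hu2 i).2.trans_le (h4 i)
    rw [shift_coe] at h
    exact ereal_add_lt_cancel h

end Geometry

/-! #### The canonical interleaving morphisms between rectangle modules -/

/-- The canonical (indicator) morphism component. -/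
def boxHomApp (a b c d : Fin n → EReal) (ε : ℝ) (u : Pt n) :
    segSpace k (box a b) u →ₗ[k] segSpace k (box c d) (shiftPt u ε) where
  toFun x := ⟨if shiftPt u ε ∈ box c d then (x : k) else 0, fun h => by
    rw [if_neg h]⟩
  map_add' x y := by
    apply Subtype.ext
    by_cases h : shiftPt u ε ∈ box c d <;> simp [h]
  map_smul' r x := by
    apply Subtype.ext
    by_cases h : shiftPt u ε ∈ box c d <;> simp [h]

lemma boxHomApp_val (a b c d : Fin n → EReal) (ε : ℝ) (u : Pt n)
    (x : segSpace k (box a b) u) :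
    ((boxHomApp (k := k) a b c d ε u x : segSpace k (box c d) (shiftPt u ε)) : k)
      = if shiftPt u ε ∈ box c d then (x : k) else 0 := rfl

lemma boxHom_natural (a b c d : Fin n → EReal) (ε : ℝ)
    (h1 : ∀ i, c i ≤ a i + (ε : EReal)) (h2 : ∀ i, d i ≤ b i + (ε : EReal))
    {u v : Pt n} (h : u ≤ v) :
    (boxHomApp (k := k) a b c d ε v).comp ((RectMod k a b).map h)
      = (((RectMod k c d).shift ε).map h).comp (boxHomApp (k := k) a b c d ε u) := by
  refine LinearMap.ext fun (x : segSpace k (box a b) u) => ?_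
  apply Subtype.ext
  show (if shiftPt v ε ∈ box c d then (if v ∈ box a b then (x : k) else 0) else 0)
      = (if shiftPt v ε ∈ box c d then (if shiftPt u ε ∈ box c d then (x : k) else 0) else 0)
  by_cases hvC : shiftPt v ε ∈ box c d
  · rw [if_pos hvC, if_pos hvC]
    by_cases huA : u ∈ box a b
    · have hvA : v ∈ box a b := geom2 h2 h huA hvC
      have huC : shiftPt u ε ∈ box c d := geom1 h1 h huA hvC
      rw [if_pos hvA, if_pos huC]
    · have hx : (x : k) = 0 := x.2 huA
      rw [hx]
      by_cases hvA : v ∈ box a b <;> by_cases huC : shiftPt u ε ∈ box c d <;>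
        simp [hvA, huC]
  · rw [if_neg hvC, if_neg hvC]

/-- The canonical interleaving morphism as a `PersHom`. -/
def boxHom (a b c d : Fin n → EReal) (ε : ℝ)
    (h1 : ∀ i, c i ≤ a i + (ε : EReal)) (h2 : ∀ i, d i ≤ b i + (ε : EReal)) :
    PersHom (RectMod k a b) ((RectMod k c d).shift ε) where
  app u := boxHomApp (k := k) a b c d ε u
  natural h := boxHom_natural a b c d ε h1 h2 h

lemma boxHom_comp (a b c d : Fin n → EReal) {ε : ℝ} (hε : 0 ≤ ε)
    (h1 : ∀ i, c i ≤ a i + (ε : EReal)) (h2 : ∀ i, d i ≤ b i + (ε : EReal))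
    (h3 : ∀ i, a i ≤ c i + (ε : EReal)) (h4 : ∀ i, b i ≤ d i + (ε : EReal))
    (u : Pt n) :
    ((boxHom (k := k) c d a b ε h3 h4).app (shiftPt u ε)).comp
        ((boxHom (k := k) a b c d ε h1 h2).app u)
      = (RectMod k a b).map ((le_shiftPt u hε).trans (le_shiftPt _ hε)) := by
  refine LinearMap.ext fun (x : segSpace k (box a b) u) => ?_
  apply Subtype.ext
  show (if shiftPt (shiftPt u ε) ε ∈ box a b
          then (if shiftPt u ε ∈ box c d then (x : k) else 0) else 0)
      = (if shiftPt (shiftPt u ε) ε ∈ box a b then (x : k) else 0)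
  by_cases h2A : shiftPt (shiftPt u ε) ε ∈ box a b
  · rw [if_pos h2A, if_pos h2A]
    by_cases huA : u ∈ box a b
    · rw [if_pos (geom3 h1 h4 huA h2A)]
    · rw [x.2 huA]
      by_cases huC : shiftPt u ε ∈ box c d <;> simp [huC]
  · rw [if_neg h2A, if_neg h2A]

/-- The "shift" interleaving: if the boxes are within `ε` of each other, the canonical
morphisms form an `ε`-interleaving. -/
lemma interleaved_of_conds {a b c d : Fin n → EReal} {ε : ℝ} (hε : 0 ≤ ε)
    (h1 : ∀ i, c i ≤ a i + (ε : EReal)) (h2 : ∀ i, d i ≤ b i + (ε : EReal))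
    (h3 : ∀ i, a i ≤ c i + (ε : EReal)) (h4 : ∀ i, b i ≤ d i + (ε : EReal)) :
    Interleaved (RectMod k a b) (RectMod k c d) ε := by
  refine ⟨hε, boxHom a b c d ε h1 h2, boxHom c d a b ε h3 h4, ?_, ?_⟩
  · intro u
    exact boxHom_comp a b c d hε h1 h2 h3 h4 u
  · intro u
    exact boxHom_comp c d a b hε h3 h4 h1 h2 u

/-! #### The trivial (zero) interleaving -/

/-- The zero morphism between (shifted) persistence modules. -/
def zeroHom (M N : PersMod k n) : PersHom M N where
  app _ := 0
  natural h := by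
    rw [LinearMap.zero_comp, LinearMap.comp_zero]

lemma rectMap_eq_zero {a b : Fin n → EReal} {u v : Pt n} (h : u ≤ v)
    (hnot : ¬(u ∈ box a b ∧ v ∈ box a b)) :
    (RectMod k a b).map h = 0 := by
  refine LinearMap.ext fun (x : segSpace k (box a b) u) => ?_
  apply Subtype.ext
  show (if v ∈ box a b then (x : k) else 0) = 0
  by_cases hv : v ∈ box a b
  · rw [if_pos hv]
    by_cases hu : u ∈ box a b
    · exact absurd ⟨hu, hv⟩ hnot
    · exact x.2 hu
  · rw [if_neg hv]

lemma interleaved_of_trivial {a b c d : Fin n → EReal} {ε : ℝ} (hε : 0 ≤ ε)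
    (hM : ∃ i, b i ≤ a i + ((2 * ε : ℝ) : EReal))
    (hN : ∃ j, d j ≤ c j + ((2 * ε : ℝ) : EReal)) :
    Interleaved (RectMod k a b) (RectMod k c d) ε := by
  have thin : ∀ (p q : Fin n → EReal), (∃ i, q i ≤ p i + ((2 * ε : ℝ) : EReal)) →
      ∀ (u : Pt n) (h : u ≤ shiftPt (shiftPt u ε) ε), (RectMod k p q).map h = 0 := by
    rintro p q ⟨i, hi⟩ u h
    apply rectMap_eq_zero
    rintro ⟨hu, hu2⟩
    have hlow : p i < ((u i : ℝ) : EReal) := (hu i).1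
    have hhigh : ((shiftPt (shiftPt u ε) ε i : ℝ) : EReal) < q i := (hu2 i).2
    have hcoe : ((shiftPt (shiftPt u ε) ε i : ℝ) : EReal)
        = ((u i : ℝ) : EReal) + ((2 * ε : ℝ) : EReal) := by
      show (((u i + ε + ε : ℝ)) : EReal) = _
      rw [← EReal.coe_add]
      norm_cast
      ring
    rw [hcoe] at hhigh
    have : ((u i : ℝ) : EReal) + ((2 * ε : ℝ) : EReal)
        < ((u i : ℝ) : EReal) + ((2 * ε : ℝ) : EReal) :=
      hhigh.trans_le (hi.trans (EReal.add_lt_add_right_coe hlow (2 * ε)).le)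
    exact lt_irrefl _ this
  refine ⟨hε, zeroHom _ _, zeroHom _ _, ?_, ?_⟩
  · intro u
    apply LinearMap.ext
    intro x
    rw [thin a b hM u ((le_shiftPt u hε).trans (le_shiftPt _ hε))]
    rfl
  · intro u
    apply LinearMap.ext
    intro x
    rw [thin c d hN u ((le_shiftPt u hε).trans (le_shiftPt _ hε))]
    rfl

end Aux

/-! #### The key lower-bound lemma -/

section Key

variable {k : Type} [Field k] {n : ℕ}

/-- A point `u` such that both `u` and `u + (2ε,…,2ε)` lie in the open box. -/
def ValidPt (a b : Fin n → EReal) (ε : ℝ) (u : Pt n) : Prop :=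
  ∀ i, a i < ((u i : ℝ) : EReal) ∧ ((u i + 2 * ε : ℝ) : EReal) < b i

lemma validPt_memA {a b : Fin n → EReal} {ε : ℝ} (hε : 0 ≤ ε) {u : Pt n}
    (hu : ValidPt a b ε u) : u ∈ box a b := by
  intro i
  refine ⟨(hu i).1, lt_of_le_of_lt ?_ (hu i).2⟩
  exact EReal.coe_le_coe_iff.2 (by linarith)

lemma validPt_memA2 {a b : Fin n → EReal} {ε : ℝ} (hε : 0 ≤ ε) {u : Pt n}
    (hu : ValidPt a b ε u) : shiftPt (shiftPt u ε) ε ∈ box a b := by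
  intro i
  have e : shiftPt (shiftPt u ε) ε i = u i + 2 * ε := by
    show u i + ε + ε = _
    ring
  rw [e]
  exact ⟨lt_of_lt_of_le (hu i).1 (EReal.coe_le_coe_iff.2 (by linarith)), (hu i).2⟩

lemma key_conds {a b c d : Fin n → EReal} {ε : ℝ}
    (ha : ∀ i, a i ≠ ⊤) (hb : ∀ i, b i ≠ ⊥) (hc : ∀ i, c i ≠ ⊤) (hd : ∀ i, d i ≠ ⊥)
    (hthick : ∀ i, a i + ((2 * ε : ℝ) : EReal) < b i)
    (hI : Interleaved (RectMod k a b) (RectMod k c d) ε) :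
    (∀ i, c i ≤ a i + (ε : EReal)) ∧ (∀ i, b i ≤ d i + (ε : EReal)) ∧
      (∀ i, d i ≤ b i + (ε : EReal)) ∧ (∀ i, a i ≤ c i + (ε : EReal)) := by
  obtain ⟨hε0, f, g, hgf, hfg⟩ := hI
  -- construct a valid point
  have hval : ∀ i, ∃ t : ℝ, a i < (t : EReal) ∧ ((t + 2 * ε : ℝ) : EReal) < b i := by
    intro i
    obtain ⟨s, hs1, hs2⟩ := EReal.exists_between_coe_real (hthick i)
    refine ⟨s - 2 * ε, ereal_lt_sub_of_add_lt hs1, ?_⟩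
    have e : (s - 2 * ε) + 2 * ε = s := by ring
    rw [e]
    exact hs2
  choose t0 ht0a ht0b using hval
  have hV0 : ValidPt a b ε t0 := fun j => ⟨ht0a j, ht0b j⟩
  have hle2 : ∀ u : Pt n, u ≤ shiftPt (shiftPt u ε) ε :=
    fun u => (le_shiftPt u hε0).trans (le_shiftPt _ hε0)
  -- the interleaving morphism f is nonzero at each valid point
  have ffact : ∀ u (hu : ValidPt a b ε u),
      (f.app u) (oneElt (k := k) (validPt_memA hε0 hu)) ≠ 0 ∧ shiftPt u ε ∈ box c d := by
    intro u hu
    have hne := intervalMap_ne_zero (k := k) (hI := box_ordConnected a b) (hle2 u) (validPt_memA hε0 hu) (validPt_memA2 hε0 hu)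
    have happ := LinearMap.congr_fun (hgf u) (oneElt (k := k) (validPt_memA hε0 hu))
    erw [LinearMap.comp_apply] at happ
    have hfne : (f.app u) (oneElt (k := k) (validPt_memA hε0 hu)) ≠ 0 := by
      intro hz
      have hz2 : (g.app (shiftPt u ε)) ((f.app u) (oneElt (k := k) (validPt_memA hε0 hu))) = 0 := by
        rw [hz]; exact map_zero _
      exact hne (happ.symm.trans hz2)
    refine ⟨hfne, ?_⟩
    by_contra hnc
    exact hfne (segSpace_eq_zero hnc _)
  -- (K1)  c ≤ a + ε
  have K1 : ∀ i, c i ≤ a i + (ε : EReal) := by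
    intro i
    by_contra hlt'
    push_neg at hlt'
    obtain ⟨s, hs1, hs2⟩ := EReal.exists_between_coe_real hlt'
    have ht1a : a i < ((s - ε : ℝ) : EReal) := ereal_lt_sub_of_add_lt hs1
    set u : Pt n := Function.update t0 i (min (s - ε) (t0 i)) with hu_def
    have hVu : ValidPt a b ε u := by
      intro j
      by_cases hji : j = i
      · subst hji
        rw [hu_def, Function.update_self]
        constructor
        · rcases min_cases (s - ε) (t0 j) with ⟨hmeq, _⟩ | ⟨hmeq, _⟩ <;> rw [hmeq]
          · exact ht1a
          · exact ht0a j
        · refine lt_of_le_of_lt (EReal.coe_le_coe_iff.2 ?_) (ht0b j)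
          have := min_le_right (s - ε) (t0 j)
          linarith
      · rw [hu_def, Function.update_of_ne hji]
        exact ⟨ht0a j, ht0b j⟩
    have hC := (ffact u hVu).2
    have hup := (hC i).1
    have hdown : ((shiftPt u ε i : ℝ) : EReal) < c i := by
      refine lt_of_le_of_lt (EReal.coe_le_coe_iff.2 ?_) hs2
      show u i + ε ≤ s
      have h1 : u i = min (s - ε) (t0 i) := by rw [hu_def, Function.update_self]
      have := min_le_left (s - ε) (t0 i)
      rw [h1]
      linarith
    exact absurd hup (not_lt.2 hdown.le)
  -- (K2)  b ≤ d + ε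
  have K2 : ∀ i, b i ≤ d i + (ε : EReal) := by
    intro i
    by_contra hlt'
    push_neg at hlt'
    have hdne : d i ≠ ⊤ := by
      intro h
      rw [h, EReal.top_add_coe] at hlt'
      exact not_top_lt hlt'
    obtain ⟨r, hr⟩ : ∃ r : ℝ, d i = (r : EReal) :=
      ⟨(d i).toReal, (EReal.coe_toReal hdne (hd i)).symm⟩
    set u : Pt n := Function.update t0 i (max (t0 i) (r - ε)) with hu_def
    have hVu : ValidPt a b ε u := by
      intro j
      by_cases hji : j = i
      · subst hji
        rw [hu_def, Function.update_self]
        constructor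
        · exact lt_of_lt_of_le (ht0a j) (EReal.coe_le_coe_iff.2 (le_max_left _ _))
        · rcases max_cases (t0 j) (r - ε) with ⟨hmeq, _⟩ | ⟨hmeq, _⟩ <;> rw [hmeq]
          · exact ht0b j
          · have e : (r - ε + 2 * ε : ℝ) = r + ε := by ring
            rw [e, EReal.coe_add, ← hr]
            exact hlt'
      · rw [hu_def, Function.update_of_ne hji]
        exact ⟨ht0a j, ht0b j⟩
    have hC := (ffact u hVu).2
    have hup := (hC i).2
    rw [hr] at hup
    have h1 : shiftPt u ε i = u i + ε := rfl
    have h2 : u i = max (t0 i) (r - ε) := by rw [hu_def, Function.update_self]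
    have h3 : shiftPt u ε i < r := EReal.coe_lt_coe_iff.1 hup
    have h4 : r - ε ≤ u i := h2 ▸ le_max_right _ _
    rw [h1] at h3
    linarith
  -- (K4)  a ≤ c + ε
  have K4 : ∀ i, a i ≤ c i + (ε : EReal) := by
    intro i
    by_contra hlt'
    push_neg at hlt'
    have hane : a i ≠ ⊥ := ne_bot_of_gt hlt'
    obtain ⟨r, hr⟩ : ∃ r : ℝ, a i = (r : EReal) :=
      ⟨(a i).toReal, (EReal.coe_toReal (ha i) hane).symm⟩
    have hg0 : ∀ w : Pt n, g.app w = 0 := by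
      intro w
      by_cases hwC : w ∈ box c d
      · have hlt'' : c i + (ε : EReal) < (r : EReal) := hr ▸ hlt'
        have hcmin : c i < ((min (w i) (r - ε) : ℝ) : EReal) := by
          rcases min_cases (w i) (r - ε) with ⟨hmeq, _⟩ | ⟨hmeq, _⟩ <;> rw [hmeq]
          · exact (hwC i).1
          · exact ereal_lt_sub_of_add_lt hlt''
        obtain ⟨t, ht1, ht2⟩ := EReal.exists_between_coe_real hcmin
        have htr : t < min (w i) (r - ε) := EReal.coe_lt_coe_iff.1 ht2
        set v : Pt n := Function.update w i t with hv_def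
        have hvw : v ≤ w := by
          intro j
          by_cases hji : j = i
          · subst hji
            rw [hv_def, Function.update_self]
            exact le_trans htr.le (min_le_left _ _)
          · rw [hv_def, Function.update_of_ne hji]
        have hvC : v ∈ box c d := by
          intro j
          by_cases hji : j = i
          · subst hji
            rw [hv_def, Function.update_self]
            refine ⟨ht1, lt_trans (EReal.coe_lt_coe_iff.2 ?_) (hwC j).2⟩
            exact lt_of_lt_of_le htr (min_le_left _ _)
          · rw [hv_def, Function.update_of_ne hji]
            exact hwC j
        have hvA : shiftPt v ε ∉ box a b := by
          intro hmem
          have hmm := (hmem i).1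
          rw [hr] at hmm
          have h1 : shiftPt v ε i = t + ε := by
            show v i + ε = t + ε
            rw [hv_def, Function.update_self]
          have h2 : r < t + ε := by
            rw [h1] at hmm
            exact EReal.coe_lt_coe_iff.1 hmm
          have h3 : t < r - ε := lt_of_lt_of_le htr (min_le_right _ _)
          linarith
        have hgv : g.app v = 0 := by
          refine LinearMap.ext fun (x : segSpace k (box c d) v) => ?_
          exact segSpace_eq_zero hvA _
        have hnat := g.natural hvw
        refine LinearMap.ext fun (x : segSpace k (box c d) w) => ?_
        have hy : ((RectMod k c d).map hvw)
            (⟨(x : k), fun hk => absurd hvC hk⟩ : segSpace k (box c d) v) = x := by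
          apply Subtype.ext
          show (if w ∈ box c d then (x : k) else 0) = (x : k)
          rw [if_pos hwC]
        have happ := LinearMap.congr_fun hnat
          (⟨(x : k), fun hk => absurd hvC hk⟩ : segSpace k (box c d) v)
        erw [LinearMap.comp_apply, LinearMap.comp_apply, hy, hgv] at happ
        simp at happ
        exact happ.trans rfl
      · refine LinearMap.ext fun (x : segSpace k (box c d) w) => ?_
        have hx0 : x = (0 : (RectMod k c d).obj w) := segSpace_eq_zero hwC x
        rw [hx0, map_zero]
        rfl
    have hmapne := intervalMap_ne_zero (k := k) (hI := box_ordConnected a b) (hle2 t0) (validPt_memA hε0 hV0) (validPt_memA2 hε0 hV0)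
    have happ := LinearMap.congr_fun (hgf t0) (oneElt (k := k) (validPt_memA hε0 hV0))
    erw [LinearMap.comp_apply, hg0 (shiftPt t0 ε)] at happ
    have h' := happ.symm
    simp at h'
    exact hmapne h'
  -- (K3)  d ≤ b + ε
  have K3 : ∀ i, d i ≤ b i + (ε : EReal) := by
    intro i
    by_contra hlt'
    push_neg at hlt'
    have hbne : b i ≠ ⊤ := by
      intro h
      rw [h, EReal.top_add_coe] at hlt'
      exact not_top_lt hlt'
    obtain ⟨rb, hrb⟩ : ∃ r : ℝ, b i = (r : EReal) :=
      ⟨(b i).toReal, (EReal.coe_toReal hbne (hb i)).symm⟩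
    set v : Pt n := Function.update t0 i rb with hv_def
    have huv : t0 ≤ v := by
      intro j
      by_cases hji : j = i
      · subst hji
        rw [hv_def, Function.update_self]
        have := EReal.coe_lt_coe_iff.1 (hrb ▸ ht0b j)
        linarith
      · rw [hv_def, Function.update_of_ne hji]
    have hvnA : v ∉ box a b := by
      intro hmem
      have := (hmem i).2
      rw [hrb, hv_def, Function.update_self] at this
      exact lt_irrefl _ this
    have hC0 := (ffact t0 hV0).2
    have hvC : shiftPt v ε ∈ box c d := by
      intro j
      by_cases hji : j = i
      · subst hji
        have h1 : shiftPt v ε j = rb + ε := by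
          show v j + ε = rb + ε
          rw [hv_def, Function.update_self]
        rw [h1]
        constructor
        · calc c j ≤ a j + (ε : EReal) := K1 j
            _ < ((t0 j : ℝ) : EReal) + (ε : EReal) :=
              EReal.add_lt_add_right_coe (ht0a j) ε
            _ = ((t0 j + ε : ℝ) : EReal) := (EReal.coe_add _ _).symm
            _ ≤ ((rb + ε : ℝ) : EReal) := by
              refine EReal.coe_le_coe_iff.2 ?_
              have := EReal.coe_lt_coe_iff.1 (hrb ▸ ht0b j)
              linarith
        · rw [EReal.coe_add, ← hrb]
          exact hlt'
      · have h1 : shiftPt v ε j = shiftPt t0 ε j := by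
          show v j + ε = t0 j + ε
          rw [hv_def, Function.update_of_ne hji]
        rw [h1]
        exact hC0 j
    have hnat := f.natural huv
    have hfne := (ffact t0 hV0).1
    have happ := LinearMap.congr_fun hnat (oneElt (k := k) (validPt_memA hε0 hV0))
    erw [LinearMap.comp_apply, LinearMap.comp_apply] at happ
    have hMz : ((RectMod k a b).map huv) (oneElt (k := k) (validPt_memA hε0 hV0)) = 0 := by
      apply Subtype.ext
      show (if v ∈ box a b then (1 : k) else 0) = 0
      rw [if_neg hvnA]
    rw [hMz, map_zero] at happ
    exact intervalMap_inj (hI := box_ordConnected c d) (shiftPt_mono ε huv) hvC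
      (f.app t0 (oneElt (k := k) (validPt_memA hε0 hV0))) hfne happ.symm
  exact ⟨K1, K2, K3, K4⟩

end Key

theorem interleavingDist_rectMod_nParam {n : ℕ} (hn : 0 < n)
    (a b c d : Fin n → EReal)
    (ha : ∀ i, a i ≠ ⊤) (hb : ∀ i, b i ≠ ⊥)
    (hc : ∀ i, c i ≠ ⊤) (hd : ∀ i, d i ≠ ⊥) (hab : ∀ i, a i < b i) (hcd : ∀ i, c i < d i) :
    interleavingDist (RectMod k a b) (RectMod k c d) = dIFormula a b c d := by
  have hnonempty : Nonempty (Fin n) := ⟨⟨0, hn⟩⟩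
  have hesub_ba : ∀ i, esub (b i) (a i) = b i - a i := by
    intro i
    unfold esub
    rw [if_neg]
    rintro (⟨h1, h2⟩ | ⟨h1, h2⟩)
    exacts [ha i h2, hb i h1]
  have hesub_dc : ∀ i, esub (d i) (c i) = d i - c i := by
    intro i
    unfold esub
    rw [if_neg]
    rintro (⟨h1, h2⟩ | ⟨h1, h2⟩)
    exacts [hc i h2, hd i h1]
  apply le_antisymm
  · -- upper bound
    show interleavingDist (RectMod k a b) (RectMod k c d)
      ≤ min (max (⨅ i, esub (b i) (a i) / 2) (⨅ i, esub (d i) (c i) / 2))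
          (max (supDist c a) (supDist d b))
    rcases le_total (max (⨅ i, esub (b i) (a i) / 2) (⨅ i, esub (d i) (c i) / 2))
        (max (supDist c a) (supDist d b)) with hTS | hTS
    · rw [min_eq_left hTS]
      by_cases htop : max (⨅ i, esub (b i) (a i) / 2) (⨅ i, esub (d i) (c i) / 2) = ⊤
      · rw [htop]; exact le_top
      · have hT0 : (0 : EReal)
            ≤ max (⨅ i, esub (b i) (a i) / 2) (⨅ i, esub (d i) (c i) / 2) := by
          refine le_trans ?_ (le_max_left _ _)
          refine le_iInf fun i => EReal.div_nonneg ?_ (by norm_num)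
          exact esub_nonneg_of_lt (ha i) (hb i) (hab i)
        have hbot : max (⨅ i, esub (b i) (a i) / 2) (⨅ i, esub (d i) (c i) / 2) ≠ ⊥ := by
          intro h
          rw [h] at hT0
          exact absurd hT0 (by simp)
        set t : ℝ := (max (⨅ i, esub (b i) (a i) / 2) (⨅ i, esub (d i) (c i) / 2)).toReal
          with ht_def
        have hcoe : ((t : ℝ) : EReal)
            = max (⨅ i, esub (b i) (a i) / 2) (⨅ i, esub (d i) (c i) / 2) :=
          EReal.coe_toReal htop hbot
        have ht0 : (0 : ℝ) ≤ t := by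
          rw [← EReal.coe_nonneg, hcoe]
          exact hT0
        obtain ⟨i0, hi0⟩ := Finite.exists_min (fun i => esub (b i) (a i) / 2)
        obtain ⟨j0, hj0⟩ := Finite.exists_min (fun j => esub (d j) (c j) / 2)
        have hM : ∃ i, b i ≤ a i + ((2 * t : ℝ) : EReal) := by
          refine ⟨i0, le_add_of_esub_le (div2_le_iff.1 ?_)⟩
          refine le_trans (le_iInf hi0) ?_
          rw [hcoe]
          exact le_max_left _ _
        have hN : ∃ j, d j ≤ c j + ((2 * t : ℝ) : EReal) := by
          refine ⟨j0, le_add_of_esub_le (div2_le_iff.1 ?_)⟩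
          refine le_trans (le_iInf hj0) ?_
          rw [hcoe]
          exact le_max_right _ _
        rw [← hcoe]
        exact sInf_le ⟨t, interleaved_of_trivial ht0 hM hN, rfl⟩
    · rw [min_eq_right hTS]
      by_cases htop : max (supDist c a) (supDist d b) = ⊤
      · rw [htop]; exact le_top
      · have hS0 : (0 : EReal) ≤ max (supDist c a) (supDist d b) := by
          refine le_trans ?_ (le_max_left _ _)
          obtain ⟨i0⟩ := hnonempty
          exact le_trans (eabs_nonneg _) (le_iSup (fun i => eabs (esub (c i) (a i))) i0)
        have hbot : max (supDist c a) (supDist d b) ≠ ⊥ := by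
          intro h
          rw [h] at hS0
          exact absurd hS0 (by simp)
        set s : ℝ := (max (supDist c a) (supDist d b)).toReal with hs_def
        have hcoe : ((s : ℝ) : EReal) = max (supDist c a) (supDist d b) :=
          EReal.coe_toReal htop hbot
        have hs0 : (0 : ℝ) ≤ s := by
          rw [← EReal.coe_nonneg, hcoe]
          exact hS0
        have hca : ∀ i, eabs (esub (c i) (a i)) ≤ ((s : ℝ) : EReal) := by
          intro i
          rw [hcoe]
          exact le_trans (le_iSup (fun i => eabs (esub (c i) (a i))) i)
            (le_max_left _ _)
        have hdb : ∀ i, eabs (esub (d i) (b i)) ≤ ((s : ℝ) : EReal) := by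
          intro i
          rw [hcoe]
          exact le_trans (le_iSup (fun i => eabs (esub (d i) (b i))) i)
            (le_max_right _ _)
        have h1 : ∀ i, c i ≤ a i + (s : EReal) := fun i => ((eabs_esub_le_iff hs0).1 (hca i)).1
        have h3 : ∀ i, a i ≤ c i + (s : EReal) := fun i => ((eabs_esub_le_iff hs0).1 (hca i)).2
        have h2 : ∀ i, d i ≤ b i + (s : EReal) := fun i => ((eabs_esub_le_iff hs0).1 (hdb i)).1
        have h4 : ∀ i, b i ≤ d i + (s : EReal) := fun i => ((eabs_esub_le_iff hs0).1 (hdb i)).2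
        rw [← hcoe]
        exact sInf_le ⟨s, interleaved_of_conds hs0 h1 h2 h3 h4, rfl⟩
  · -- lower bound
    apply le_sInf
    rintro x ⟨ε, hIx, rfl⟩
    obtain ⟨hε0, ff, gg, hp1, hp2⟩ := hIx
    show min (max (⨅ i, esub (b i) (a i) / 2) (⨅ i, esub (d i) (c i) / 2))
        (max (supDist c a) (supDist d b)) ≤ (ε : EReal)
    by_cases hT1 : max (⨅ i, esub (b i) (a i) / 2) (⨅ i, esub (d i) (c i) / 2) ≤ (ε : EReal)
    · exact le_trans (min_le_left _ _) hT1
    · push_neg at hT1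
      refine le_trans (min_le_right _ _) ?_
      have hconds : (∀ i, c i ≤ a i + (ε : EReal)) ∧ (∀ i, b i ≤ d i + (ε : EReal)) ∧
          (∀ i, d i ≤ b i + (ε : EReal)) ∧ (∀ i, a i ≤ c i + (ε : EReal)) := by
        rcases lt_max_iff.1 hT1 with hM | hN
        · have hthick : ∀ i, a i + ((2 * ε : ℝ) : EReal) < b i := by
            intro i
            have h1 : (ε : EReal) < esub (b i) (a i) / 2 :=
              lt_of_lt_of_le hM (iInf_le _ i)
            exact add_lt_of_coe_lt_esub (by linarith) (coe_lt_div2_iff.1 h1)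
          exact key_conds ha hb hc hd hthick ⟨hε0, ff, gg, hp1, hp2⟩
        · have hthick : ∀ i, c i + ((2 * ε : ℝ) : EReal) < d i := by
            intro i
            have h1 : (ε : EReal) < esub (d i) (c i) / 2 :=
              lt_of_lt_of_le hN (iInf_le _ i)
            exact add_lt_of_coe_lt_esub (by linarith) (coe_lt_div2_iff.1 h1)
          obtain ⟨s1, s2, s3, s4⟩ :=
            key_conds hc hd ha hb hthick ⟨hε0, gg, ff, hp2, hp1⟩
          exact ⟨s4, s3, s2, s1⟩
      obtain ⟨h1, h2, h3, h4⟩ := hconds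
      apply max_le
      · exact iSup_le fun i => (eabs_esub_le_iff hε0).2 ⟨h1 i, h4 i⟩
      · exact iSup_le fun i => (eabs_esub_le_iff hε0).2 ⟨h3 i, h2 i⟩

end
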